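/- arXiv:1404.1449 — 5 statements merged into one kernel-verified Lean document; each statement's English description precedes it below -/
import Mathlib

section
/- Let n ≥ 2 and let f : ℝⁿ → ℝ be indistinguishable (invariant under every permutation of its n arguments) and twice differentiable at the symmetric point c^⊗n = (c,…,c). Then for every h ∈ ℝⁿ with Σ_{j=1}^n h_j = 0, the Hessian quadratic form of f at c^⊗n satisfies Σ_{j=1}^n Σ_{j'=1}^n h_j h_{j'} · ∂²f/∂a_j∂a_{j'} (c^⊗n) = ( ∂²f/∂a_1² (c^⊗n) − ∂²f/∂a_1∂a_2 (c^⊗n) ) · Σ_{j=1}^n h_j². -/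
/-- For an indistinguishable function `f : ℝⁿ → ℝ` twice
differentiable at the symmetric point `(c,…,c)`, the Hessian quadratic form in
any zero-mean direction `h` equals
`(∂²f/∂a₁²(c^⊗n) − ∂²f/∂a₁∂a₂(c^⊗n)) · Σ h_j²`. -/
theorem stmt_4 (n : ℕ) (hn : 2 ≤ n) (f : (Fin n → ℝ) → ℝ) (c : ℝ)
    (hsym : ∀ (π : Equiv.Perm (Fin n)) (a : Fin n → ℝ), f (a ∘ π) = f a)
    (hdiff : ContDiffAt ℝ 2 f (fun _ => c)) :
    ∀ h : Fin n → ℝ, ∑ j, h j = 0 →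
      ∑ j, ∑ j', h j * h j' *
          fderiv ℝ (fun y => fderiv ℝ f y (Pi.single j' 1)) (fun _ => c) (Pi.single j 1) =
        (fderiv ℝ (fun y => fderiv ℝ f y (Pi.single (⟨0, by omega⟩ : Fin n) 1))
            (fun _ => c) (Pi.single (⟨0, by omega⟩ : Fin n) 1) -
         fderiv ℝ (fun y => fderiv ℝ f y (Pi.single (⟨1, by omega⟩ : Fin n) 1))
            (fun _ => c) (Pi.single (⟨0, by omega⟩ : Fin n) 1)) *
        ∑ j, (h j) ^ 2 := by
  intro h hsum
  set cc : Fin n → ℝ := fun _ => c with hcc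
  set g : (Fin n → ℝ) → (Fin n → ℝ) →L[ℝ] ℝ := fderiv ℝ f with hgdef
  have hg1 : ContDiffAt ℝ 1 g cc := hdiff.fderiv_right (by norm_num)
  have hgd : DifferentiableAt ℝ g cc := hg1.differentiableAt (by norm_num)
  set D2 : (Fin n → ℝ) →L[ℝ] (Fin n → ℝ) →L[ℝ] ℝ := fderiv ℝ g cc with hD2
  -- key invariance under permutations
  have key : ∀ (σ : Equiv.Perm (Fin n)) (u v : Fin n → ℝ),
      D2 u v = D2 (u ∘ σ) (v ∘ σ) := by
    intro σ u v
    let e : (Fin n → ℝ) ≃L[ℝ] (Fin n → ℝ) :=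
      (LinearEquiv.funCongrLeft ℝ ℝ σ).toContinuousLinearEquiv
    have he : ∀ x : Fin n → ℝ, e x = x ∘ σ := fun x => rfl
    have hec : e cc = cc := rfl
    set Φ : ((Fin n → ℝ) →L[ℝ] ℝ) →L[ℝ] ((Fin n → ℝ) →L[ℝ] ℝ) :=
      (ContinuousLinearMap.compL ℝ (Fin n → ℝ) (Fin n → ℝ) ℝ).flip
        (e : (Fin n → ℝ) →L[ℝ] (Fin n → ℝ)) with hΦ
    have hΦapp : ∀ (L : (Fin n → ℝ) →L[ℝ] ℝ),
        Φ L = L.comp (e : (Fin n → ℝ) →L[ℝ] (Fin n → ℝ)) := fun L => rfl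
    have hev : ∀ᶠ x in nhds cc, ContDiffAt ℝ 2 f x := hdiff.eventually (by simp)
    have htend : Filter.Tendsto e (nhds cc) (nhds cc) := by
      simpa [hec] using e.continuous.tendsto cc
    have hev2 : ∀ᶠ x in nhds cc, DifferentiableAt ℝ f (e x) :=
      htend.eventually (hev.mono fun y hy => hy.differentiableAt (by norm_num))
    have heq : g =ᶠ[nhds cc] fun x => Φ (g (e x)) := by
      filter_upwards [hev2] with x hx
      have hfe : f = fun y => f (e y) := by
        funext y; rw [he]; exact (hsym σ y).symm
      have : g x = fderiv ℝ (f ∘ e) x := by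
        rw [hgdef]; congr 1
      rw [this, fderiv_comp x hx e.differentiableAt, e.fderiv, hΦapp]
    have h1 : HasFDerivAt g D2 cc := hgd.hasFDerivAt
    have h2 : HasFDerivAt (fun x => g (e x))
        (D2.comp (e : (Fin n → ℝ) →L[ℝ] (Fin n → ℝ))) cc := by
      have he' : HasFDerivAt (⇑e) (e : (Fin n → ℝ) →L[ℝ] (Fin n → ℝ)) cc :=
        e.hasFDerivAt
      exact (hec ▸ h1).comp cc he'
    have h3 : HasFDerivAt (fun x => Φ (g (e x)))
        (Φ.comp (D2.comp (e : (Fin n → ℝ) →L[ℝ] (Fin n → ℝ)))) cc :=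
      Φ.hasFDerivAt.comp cc h2
    have hD2eq : D2 = Φ.comp (D2.comp (e : (Fin n → ℝ) →L[ℝ] (Fin n → ℝ))) :=
      heq.fderiv_eq.trans h3.fderiv
    calc D2 u v
        = (Φ.comp (D2.comp (e : (Fin n → ℝ) →L[ℝ] (Fin n → ℝ)))) u v := by rw [← hD2eq]
      _ = D2 (e u) (e v) := rfl
      _ = D2 (u ∘ σ) (v ∘ σ) := by rw [he u, he v]
  -- singles under permutation
  have hsingle : ∀ (σ : Equiv.Perm (Fin n)) (j : Fin n),
      (Pi.single j (1:ℝ)) ∘ σ = Pi.single (σ⁻¹ j) 1 := by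
    intro σ j; funext i
    simp only [Function.comp_apply, Pi.single_apply]
    congr 1
    rw [Equiv.Perm.inv_def, Equiv.eq_symm_apply]
  -- the hessian entries equal D2 applied to singles
  have hH : ∀ j j' : Fin n,
      fderiv ℝ (fun y => fderiv ℝ f y (Pi.single j' 1)) cc (Pi.single j 1)
        = D2 (Pi.single j 1) (Pi.single j' 1) := by
    intro j j'
    have : fderiv ℝ (fun y => g y (Pi.single j' 1)) cc
        = (g cc).comp (fderiv ℝ (fun _ => (Pi.single j' (1:ℝ))) cc)
          + (fderiv ℝ g cc).flip (Pi.single j' 1) :=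
      fderiv_clm_apply hgd (differentiableAt_const _)
    rw [hgdef] at this
    rw [this]
    simp [hD2]
    rfl
  set i0 : Fin n := ⟨0, by omega⟩ with hi0
  set i1 : Fin n := ⟨1, by omega⟩ with hi1
  have hi01 : i0 ≠ i1 := by simp [hi0, hi1, Fin.ext_iff]
  set A := D2 (Pi.single i0 1) (Pi.single i0 1) with hA
  set B := D2 (Pi.single i0 1) (Pi.single i1 1) with hB
  have hdiag : ∀ j, D2 (Pi.single j 1) (Pi.single j 1) = A := by
    intro j
    have := key (Equiv.swap j i0)⁻¹ (Pi.single j 1) (Pi.single j 1)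
    rw [hsingle] at this
    have h' : (Equiv.swap j i0)⁻¹⁻¹ j = i0 := by simp
    rw [h'] at this
    exact this
  have hoff : ∀ j j', j ≠ j' → D2 (Pi.single j 1) (Pi.single j' 1) = B := by
    intro j j' hjj
    set τ₁ : Equiv.Perm (Fin n) := Equiv.swap j i0 with hτ₁
    set k : Fin n := τ₁ j' with hk
    have hk0 : k ≠ i0 := by
      rw [hk]
      intro hcon
      exact hjj (τ₁.injective (by rw [hcon, hτ₁, Equiv.swap_apply_left])).symm
    set τ : Equiv.Perm (Fin n) := τ₁.trans (Equiv.swap k i1) with hτ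
    have hτj : τ j = i0 := by
      rw [hτ]
      simp only [Equiv.trans_apply, hτ₁, Equiv.swap_apply_left]
      exact Equiv.swap_apply_of_ne_of_ne (Ne.symm hk0) hi01
    have hτj' : τ j' = i1 := by
      rw [hτ]
      simp only [Equiv.trans_apply, ← hk, Equiv.swap_apply_left]
    have := key τ⁻¹ (Pi.single j 1) (Pi.single j' 1)
    rw [hsingle, hsingle] at this
    simp only [inv_inv, hτj, hτj'] at this
    exact this
  -- rewrite everything
  have hterm : ∀ j j' : Fin n,
      h j * h j' * D2 (Pi.single j 1) (Pi.single j' 1)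
        = B * (h j * h j') + (A - B) * (if j' = j then h j * h j' else 0) := by
    intro j j'
    by_cases hjj : j = j'
    · subst hjj
      rw [hdiag, if_pos rfl]
      ring
    · rw [hoff j j' hjj, if_neg (Ne.symm hjj)]
      ring
  calc ∑ j, ∑ j', h j * h j' *
          fderiv ℝ (fun y => fderiv ℝ f y (Pi.single j' 1)) cc (Pi.single j 1)
      = ∑ j, ∑ j', (B * (h j * h j') + (A - B) * (if j' = j then h j * h j' else 0)) := by
        refine Finset.sum_congr rfl fun j _ => Finset.sum_congr rfl fun j' _ => ?_
        rw [hH, hterm]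
    _ = ∑ j, (B * (h j * ∑ j', h j') + (A - B) * (h j * h j)) := by
        refine Finset.sum_congr rfl fun j _ => ?_
        rw [Finset.sum_add_distrib]
        congr 1
        · rw [← Finset.mul_sum]
          congr 1
          rw [← Finset.mul_sum]
        · rw [← Finset.mul_sum]
          congr 1
          simp [Finset.sum_ite_eq']
    _ = (A - B) * ∑ j, (h j) ^ 2 := by
        simp only [hsum, mul_zero, zero_add]
        rw [Finset.mul_sum]
        exact Finset.sum_congr rfl fun j _ => by ring
    _ = _ := by rw [hH, hH]
end

section
/- Let n ≥ 2, c ∈ ℝ, R > 0, and let f : ℝⁿ → ℝ be indistinguishable (invariant under every permutation of its n arguments) and twice continuously differentiable on an open set containing the closed Euclidean ball B̄(c^⊗n, R) centered at the symmetric point c^⊗n = (c,…,c). Then there exists δ > 0 such that for every a ∈ B̄(c^⊗n, R), writing m̄ = (1/n) Σ_{j=1}^n a_j for the mean of a and r̄(x) = f(x,…,x) for the diagonal restriction, one has |f(a) − r̄(m̄)| ≤ δ · ‖a − m̄^⊗n‖², where ‖·‖ denotes the Euclidean norm on ℝⁿ. -/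
lemma ball_eq_image (n : ℕ) (c R : ℝ) (hR : 0 ≤ R) :
    {a : Fin n → ℝ | ∑ j, (a j - c) ^ 2 ≤ R ^ 2} =
      ⇑(PiLp.continuousLinearEquiv 2 ℝ (fun _ : Fin n => ℝ)) ''
        Metric.closedBall (WithLp.toLp 2 (fun _ => c) : EuclideanSpace ℝ (Fin n)) R := by
  rw [ContinuousLinearEquiv.image_eq_preimage_symm]
  ext a
  simp only [Set.mem_setOf_eq, Set.mem_preimage, Metric.mem_closedBall]
  have : dist ((PiLp.continuousLinearEquiv 2 ℝ (fun _ : Fin n => ℝ)).symm a)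
      (WithLp.toLp 2 (fun _ => c) : EuclideanSpace ℝ (Fin n)) = Real.sqrt (∑ j, (a j - c) ^ 2) := by
    rw [EuclideanSpace.dist_eq]
    congr 1
    refine Finset.sum_congr rfl fun j _ => ?_
    rw [Real.dist_eq, sq_abs]
    rfl
  rw [this, show R = Real.sqrt (R ^ 2) by rw [Real.sqrt_sq hR],
    Real.sqrt_le_sqrt_iff (by positivity), Real.sqrt_sq hR]

lemma diag_deriv_zero (n : ℕ) (hn : 0 < n) (f : (Fin n → ℝ) → ℝ)
    (s : Set (Fin n → ℝ)) (hs : IsOpen s)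
    (hsym : ∀ (π : Equiv.Perm (Fin n)) (a : Fin n → ℝ), f (a ∘ π) = f a)
    (hf : ContDiffOn ℝ 2 f s) (x : ℝ) (hx : (fun _ => x) ∈ s)
    (v : Fin n → ℝ) (hv : ∑ j, v j = 0) :
    fderiv ℝ f (fun _ => x) v = 0 := by
  have hd : DifferentiableAt ℝ f (fun _ => x) :=
    (hf.contDiffAt (hs.mem_nhds hx)).differentiableAt two_ne_zero
  set F := fderiv ℝ f (fun _ => x) with hF
  have hperm : ∀ (π : Equiv.Perm (Fin n)) (w : Fin n → ℝ), F (w ∘ π) = F w := by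
    intro π w
    set T := (LinearMap.funLeft ℝ ℝ ⇑π).toContinuousLinearMap with hT
    have hcomp : HasFDerivAt (f ∘ ⇑T) (F.comp T) (fun _ => x) := by
      have := hd.hasFDerivAt
      exact this.comp (fun _ => x) T.hasFDerivAt
    have hfcomp : f ∘ ⇑T = f := funext fun a => hsym π a
    rw [hfcomp] at hcomp
    have huniq : F.comp T = F := hcomp.unique hd.hasFDerivAt
    calc F (w ∘ π) = (F.comp T) w := rfl
    _ = F w := by rw [huniq]
  have i0 : Fin n := ⟨0, hn⟩
  have hbase : ∀ j : Fin n,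
      F (fun k => if k = j then (1:ℝ) else 0) = F (fun k => if k = i0 then (1:ℝ) else 0) := by
    intro j
    have : ((fun k => if k = j then (1:ℝ) else 0) ∘ (Equiv.swap i0 j))
        = fun k => if k = i0 then (1:ℝ) else 0 := by
      funext k
      simp only [Function.comp_apply]
      congr 1
      simp only [eq_iff_iff]
      constructor
      · intro h
        exact (Equiv.swap i0 j).injective (h.trans (Equiv.swap_apply_left i0 j).symm)
      · intro h; rw [h, Equiv.swap_apply_left]
    rw [← this, hperm]
  have hvdecomp : v = ∑ j, v j • (fun k => if k = j then (1:ℝ) else 0) := by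
    funext k
    simp [Finset.sum_apply, Pi.smul_apply]
  calc F v = F (∑ j, v j • (fun k => if k = j then (1:ℝ) else 0)) := by rw [← hvdecomp]
  _ = ∑ j, v j * F (fun k => if k = j then (1:ℝ) else 0) := by
      rw [map_sum]; exact Finset.sum_congr rfl fun j _ => by rw [map_smul]; rfl
  _ = ∑ j, v j * F (fun k => if k = i0 then (1:ℝ) else 0) :=
      Finset.sum_congr rfl fun j _ => by rw [hbase j]
  _ = (∑ j, v j) * F (fun k => if k = i0 then (1:ℝ) else 0) := by rw [Finset.sum_mul]
  _ = 0 := by rw [hv, zero_mul]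

/-- For an indistinguishable function `f : ℝⁿ → ℝ` which is C² on an
open set containing the closed Euclidean ball of radius `R` around the symmetric
point `(c,…,c)`, there is `δ > 0` such that for every profile `a` in that ball,
`|f(a) − r̄(m̄)| ≤ δ · ‖a − m̄^⊗n‖²` (Euclidean norm), where `m̄` is the mean of `a`
and `r̄` the diagonal restriction of `f`. The Euclidean ball and squared Euclidean
norm are written via sums of squares. -/
theorem stmt_6 (n : ℕ) (hn : 2 ≤ n) (c R : ℝ) (hR : 0 < R)
    (f : (Fin n → ℝ) → ℝ) (s : Set (Fin n → ℝ)) (hs : IsOpen s)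
    (hball : {a : Fin n → ℝ | ∑ j, (a j - c) ^ 2 ≤ R ^ 2} ⊆ s)
    (hsym : ∀ (π : Equiv.Perm (Fin n)) (a : Fin n → ℝ), f (a ∘ π) = f a)
    (hf : ContDiffOn ℝ 2 f s) :
    ∃ δ > 0, ∀ a : Fin n → ℝ, ∑ j, (a j - c) ^ 2 ≤ R ^ 2 →
      |f a - f (fun _ => (∑ i, a i) / n)| ≤
        δ * ∑ j, (a j - (∑ i, a i) / n) ^ 2 := by
  have hn0 : (0:ℝ) < n := by
    have : (0:ℕ) < n := lt_of_lt_of_le two_pos hn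
    exact_mod_cast this
  set S : Set (Fin n → ℝ) := {a : Fin n → ℝ | ∑ j, (a j - c) ^ 2 ≤ R ^ 2} with hSdef
  have hSimg := ball_eq_image n c R hR.le
  set e := PiLp.continuousLinearEquiv 2 ℝ (fun _ : Fin n => ℝ) with he
  have hSconv : Convex ℝ S := by
    rw [hSdef, hSimg]
    exact (convex_closedBall _ _).is_linear_image
      ⟨fun a b => map_add e a b, fun r a => map_smul e r a⟩
  have hScomp : IsCompact S := by
    rw [hSdef, hSimg]
    exact (isCompact_closedBall _ _).image e.continuous
  -- derivatives
  have hdiffAt : ∀ x ∈ s, HasFDerivAt f (fderiv ℝ f x) x := fun x hx =>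
    ((hf.contDiffAt (hs.mem_nhds hx)).differentiableAt two_ne_zero).hasFDerivAt
  have hF1 : ContDiffOn ℝ 1 (fderiv ℝ f) s := hf.fderiv_of_isOpen hs (by norm_num)
  have hFd : ∀ x ∈ s, HasFDerivAt (fderiv ℝ f) (fderiv ℝ (fderiv ℝ f) x) x := fun x hx =>
    ((hF1.contDiffAt (hs.mem_nhds hx)).differentiableAt one_ne_zero).hasFDerivAt
  have hF'cont : ContinuousOn (fderiv ℝ (fderiv ℝ f)) s :=
    hF1.continuousOn_fderiv_of_isOpen hs le_rfl
  obtain ⟨C, hC⟩ := hScomp.exists_bound_of_continuousOn (f := fderiv ℝ (fderiv ℝ f)) (by exact hF'cont.mono hball)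
  set C0 := max C 0 with hC0
  have hC0nn : 0 ≤ C0 := le_max_right _ _
  have hFlip : ∀ x ∈ S, ∀ y ∈ S, ‖fderiv ℝ f y - fderiv ℝ f x‖ ≤ C0 * ‖y - x‖ := by
    intro x hx y hy
    exact hSconv.norm_image_sub_le_of_norm_hasFDerivWithin_le
      (fun z hz => (hFd z (hball hz)).hasFDerivWithinAt)
      (fun z hz => le_trans (hC z hz) (le_max_left _ _)) hx hy
  refine ⟨C0 + 1, by positivity, ?_⟩
  intro a haS
  set mb : ℝ := (∑ i, a i) / n with hmb
  set m : Fin n → ℝ := fun _ => mb with hm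
  have hsum_ac : ∑ j, (a j - c) = (n : ℝ) * (mb - c) := by
    rw [Finset.sum_sub_distrib, Finset.sum_const, Finset.card_univ, Fintype.card_fin, nsmul_eq_mul]
    rw [hmb, mul_sub, mul_div_assoc', mul_div_cancel_left₀ _ hn0.ne']
  have hmS : m ∈ S := by
    have h1 : (∑ j, (a j - c)) ^ 2 ≤ (n:ℝ) * ∑ j, (a j - c) ^ 2 := by
      have := sq_sum_le_card_mul_sum_sq (s := (Finset.univ : Finset (Fin n)))
        (f := fun j => a j - c)
      simpa [Finset.card_univ] using this
    have hgoal : ∑ j, (m j - c) ^ 2 = (n:ℝ) * (mb - c)^2 := by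
      simp [hm, Finset.sum_const, Finset.card_univ, nsmul_eq_mul]
    rw [hSdef, Set.mem_setOf_eq, hgoal]
    have haS' : ∑ j, (a j - c) ^ 2 ≤ R ^ 2 := haS
    rw [hsum_ac] at h1
    nlinarith [sq_nonneg (mb - c), mul_le_mul_of_nonneg_left haS' hn0.le]
  have hmS_s : m ∈ s := hball hmS
  have hsumv : ∑ j, (a - m) j = 0 := by
    simp only [Pi.sub_apply, hm]
    rw [Finset.sum_sub_distrib, Finset.sum_const, Finset.card_univ, Fintype.card_fin, nsmul_eq_mul]
    rw [hmb, mul_div_assoc', mul_div_cancel_left₀ _ hn0.ne', sub_self]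
  have hFm0 : fderiv ℝ f m (a - m) = 0 := by
    have := diag_deriv_zero n (lt_of_lt_of_le two_pos hn) f s hs hsym hf mb hmS_s (a - m) hsumv
    exact this
  -- mean value estimate on segment
  have hsegsub : segment ℝ m a ⊆ S := hSconv.segment_subset hmS haS
  have hbound : ∀ z ∈ segment ℝ m a, ‖fderiv ℝ f z - fderiv ℝ f m‖ ≤ C0 * ‖a - m‖ := by
    intro z hz
    refine le_trans (hFlip m hmS z (hsegsub hz)) ?_
    have : ‖z - m‖ ≤ ‖a - m‖ := by
      obtain ⟨u, v, hu, hv, huv, rfl⟩ := hz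
      have : u • m + v • a - m = v • (a - m) := by
        have hu1 : u = 1 - v := by linarith
        rw [hu1]; module
      rw [this, norm_smul, Real.norm_eq_abs, abs_of_nonneg hv]
      nlinarith [norm_nonneg (a - m)]
    nlinarith [norm_nonneg (z - m), norm_nonneg (a - m)]
  have hkey : ‖f a - f m - (fderiv ℝ f m) (a - m)‖ ≤ (C0 * ‖a - m‖) * ‖a - m‖ :=
    (convex_segment m a).norm_image_sub_le_of_norm_hasFDerivWithin_le'
      (fun z hz => (hdiffAt z (hball (hsegsub hz))).hasFDerivWithinAt)
      hbound (left_mem_segment ℝ m a) (right_mem_segment ℝ m a)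
  rw [hFm0, sub_zero] at hkey
  -- compare norms
  have hsq : ‖a - m‖ ^ 2 ≤ ∑ j, (a j - mb) ^ 2 := by
    have hnn : (0:ℝ) ≤ ∑ j, (a j - mb) ^ 2 := by positivity
    have hle : ‖a - m‖ ≤ Real.sqrt (∑ j, (a j - mb) ^ 2) := by
      rw [pi_norm_le_iff_of_nonneg (Real.sqrt_nonneg _)]
      intro i
      have : (a i - mb) ^ 2 ≤ ∑ j, (a j - mb) ^ 2 :=
        Finset.single_le_sum (f := fun j => (a j - mb)^2) (fun j _ => sq_nonneg _) (Finset.mem_univ i)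
      have habs : |a i - mb| ≤ Real.sqrt (∑ j, (a j - mb) ^ 2) := Real.abs_le_sqrt this
      simpa [Pi.sub_apply, Real.norm_eq_abs, hm] using habs
    calc ‖a - m‖ ^ 2 ≤ Real.sqrt (∑ j, (a j - mb) ^ 2) ^ 2 :=
          pow_le_pow_left₀ (norm_nonneg _) hle 2
    _ = ∑ j, (a j - mb) ^ 2 := Real.sq_sqrt hnn
  have habs : |f a - f m| ≤ C0 * ‖a - m‖ ^ 2 := by
    rw [← Real.norm_eq_abs]
    calc ‖f a - f m‖ ≤ (C0 * ‖a - m‖) * ‖a - m‖ := hkey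
    _ = C0 * ‖a - m‖ ^ 2 := by ring
  calc |f a - f (fun _ => (∑ i, a i) / n)| = |f a - f m| := rfl
  _ ≤ C0 * ‖a - m‖ ^ 2 := habs
  _ ≤ (C0 + 1) * ∑ j, (a j - (∑ i, a i) / n) ^ 2 := by
      have h1 : (0:ℝ) ≤ ∑ j, (a j - mb) ^ 2 := by positivity
      have : ∑ j, (a j - (∑ i, a i) / (n:ℝ)) ^ 2 = ∑ j, (a j - mb) ^ 2 := rfl
      rw [this]
      nlinarith [sq_nonneg ‖a - m‖]
end

section
/- Let n ≥ 2, c ∈ ℝ, R > 0, let T ≥ 1, and let f : ℝⁿ → ℝ be indistinguishable (invariant under every permutation of its n arguments) and twice continuously differentiable on an open set containing the closed Euclidean ball B̄(c^⊗n, R). Let r̄(x) = f(x,…,x) be the diagonal restriction. Then there exists δ > 0 such that for every finite sequence of action profiles a_0, a_1, …, a_{T−1} ∈ B̄(c^⊗n, R), writing m̄_t = (1/n) Σ_{j=1}^n a_{j,t} for the mean of a_t, the accumulated payoff satisfies | Σ_{t=0}^{T−1} f(a_t) − Σ_{t=0}^{T−1} r̄(m̄_t) | ≤ δ · Σ_{t=0}^{T−1}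 ‖a_t − m̄_t^⊗n‖², where ‖·‖ denotes the Euclidean norm on ℝⁿ. -/
set_option maxHeartbeats 1000000

/-- Dynamic version of the nonasymptotic mean-field bound: for an
indistinguishable `f : ℝⁿ → ℝ` which is C² on an open set containing the closed
Euclidean ball of radius `R` around `(c,…,c)`, there is `δ > 0` such that for
every horizon-`T` sequence of action profiles `a_0,…,a_{T−1}` in the ball,
`|Σ_t f(a_t) − Σ_t r̄(m̄_t)| ≤ δ · Σ_t ‖a_t − m̄_t^⊗n‖²` where `m̄_t` is the mean of
`a_t`. -/
theorem stmt_7 (n : ℕ) (hn : 2 ≤ n) (c R : ℝ) (hR : 0 < R) (T : ℕ) (hT : 1 ≤ T)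
    (f : (Fin n → ℝ) → ℝ) (s : Set (Fin n → ℝ)) (hs : IsOpen s)
    (hball : {a : Fin n → ℝ | ∑ j, (a j - c) ^ 2 ≤ R ^ 2} ⊆ s)
    (hsym : ∀ (π : Equiv.Perm (Fin n)) (a : Fin n → ℝ), f (a ∘ π) = f a)
    (hf : ContDiffOn ℝ 2 f s) :
    ∃ δ > 0, ∀ a : Fin T → Fin n → ℝ,
      (∀ t : Fin T, ∑ j, (a t j - c) ^ 2 ≤ R ^ 2) →
      |(∑ t, f (a t)) - ∑ t, f (fun _ => (∑ i, a t i) / n)| ≤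
        δ * ∑ t, ∑ j, (a t j - (∑ i, a t i) / n) ^ 2 := by
  have hn0 : (0:ℝ) < (n:ℝ) := by exact_mod_cast (by omega : 0 < n)
  set K : Set (Fin n → ℝ) := {a : Fin n → ℝ | ∑ j, (a j - c) ^ 2 ≤ R ^ 2} with hKdef
  set ψ : (Fin n → ℝ) ≃L[ℝ] EuclideanSpace ℝ (Fin n) :=
    (EuclideanSpace.equiv (Fin n) ℝ).symm with hψ
  have hKeq : K = ψ ⁻¹' Metric.closedBall (ψ fun _ => c) R := by
    ext a
    have hd : dist (ψ a) (ψ fun _ => c) = Real.sqrt (∑ j, (a j - c) ^ 2) := by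
      rw [EuclideanSpace.dist_eq]
      congr 1
      refine Finset.sum_congr rfl fun j _ => ?_
      rw [show (ψ a) j = a j from rfl, show (ψ fun _ => c) j = c from rfl,
        Real.dist_eq, sq_abs]
    simp only [Set.mem_preimage, Metric.mem_closedBall, hd, hKdef, Set.mem_setOf_eq]
    constructor
    · intro h
      rw [show R = Real.sqrt (R ^ 2) by rw [Real.sqrt_sq hR.le]]
      exact Real.sqrt_le_sqrt h
    · intro h
      nlinarith [Real.sq_sqrt (show (0:ℝ) ≤ ∑ j, (a j - c) ^ 2 by positivity),
        Real.sqrt_nonneg (∑ j, (a j - c) ^ 2)]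
  have hKcompact : IsCompact K := by
    rw [hKeq]
    exact ψ.toHomeomorph.isCompact_preimage.2 (isCompact_closedBall _ _)
  have hKconv : Convex ℝ K := by
    rw [hKeq]
    exact (convex_closedBall _ _).linear_preimage ψ.toLinearEquiv.toLinearMap
  have hKs : K ⊆ s := hball
  -- differentiability facts
  have hfdiff : ∀ x ∈ s, DifferentiableAt ℝ f x := fun x hx =>
    (hf.contDiffAt (hs.mem_nhds hx)).differentiableAt (by norm_num)
  have hF1 : ContDiffOn ℝ 1 (fderiv ℝ f) s := hf.fderiv_of_isOpen hs (by norm_num)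
  have hFdiff : ∀ x ∈ s, DifferentiableAt ℝ (fderiv ℝ f) x := fun x hx =>
    (hF1.contDiffAt (hs.mem_nhds hx)).differentiableAt (by norm_num)
  have hF'cont : ContinuousOn (fderiv ℝ (fderiv ℝ f)) s :=
    hF1.continuousOn_fderiv_of_isOpen hs le_rfl
  -- bound on second derivative
  obtain ⟨C, hC⟩ := hKcompact.exists_bound_of_continuousOn (f := fderiv ℝ (fderiv ℝ f)) (hF'cont.mono hKs)
  set M : ℝ := max C 0 with hMdef
  have hM0 : 0 ≤ M := le_max_right _ _
  -- Lipschitz bound for the derivative on K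
  have hFlip : ∀ x ∈ K, ∀ y ∈ K, ‖fderiv ℝ f y - fderiv ℝ f x‖ ≤ M * ‖y - x‖ := by
    intro x hx y hy
    exact hKconv.norm_image_sub_le_of_norm_fderiv_le
      (fun z hz => hFdiff z (hKs hz))
      (fun z hz => (hC z hz).trans (le_max_left _ _)) hx hy
  -- gradient at diagonal points kills zero-sum vectors
  have grad0 : ∀ x : Fin n → ℝ, x ∈ s → (∀ i j, x i = x j) →
      ∀ v : Fin n → ℝ, ∑ j, v j = 0 → fderiv ℝ f x v = 0 := by
    intro x hx hdiag v hv
    have hfd : DifferentiableAt ℝ f x := hfdiff x hx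
    have key : ∀ π : Equiv.Perm (Fin n), ∀ w : Fin n → ℝ,
        fderiv ℝ f x (w ∘ π) = fderiv ℝ f x w := by
      intro π w
      set L : (Fin n → ℝ) →L[ℝ] (Fin n → ℝ) :=
        ContinuousLinearMap.pi (fun i => ContinuousLinearMap.proj (π i)) with hL
      have hLx : L x = x := by
        funext i
        exact hdiag (π i) i
      have h1 : HasFDerivAt (f ∘ ⇑L) ((fderiv ℝ f x).comp L) x := by
        refine HasFDerivAt.comp x ?_ L.hasFDerivAt
        rw [hLx]
        exact hfd.hasFDerivAt
      have h2 : (f ∘ ⇑L) = f := by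
        funext y
        exact hsym π y
      rw [h2] at h1
      have hfe : fderiv ℝ f x = (fderiv ℝ f x).comp L := h1.fderiv
      calc fderiv ℝ f x (w ∘ π) = ((fderiv ℝ f x).comp L) w := rfl
        _ = fderiv ℝ f x w := by rw [← hfe]
    have j0 : Fin n := ⟨0, by omega⟩
    have hsingle : ∀ j : Fin n,
        fderiv ℝ f x (Pi.single j 1) = fderiv ℝ f x (Pi.single j0 1) := by
      intro j
      have hcomp : (Pi.single j (1:ℝ)) ∘ (Equiv.swap j j0) = Pi.single j0 (1:ℝ) := by
        funext k
        have hiff : (Equiv.swap j j0) k = j ↔ k = j0 := by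
          rw [Equiv.apply_eq_iff_eq_symm_apply, Equiv.symm_swap, Equiv.swap_apply_left]
        simp [Function.comp_apply, Pi.single_apply, hiff]
      rw [← hcomp, key]
    have hv' : v = ∑ j, v j • (Pi.single j (1:ℝ) : Fin n → ℝ) := by
      funext k
      simp [Pi.single_apply, Finset.sum_apply, Finset.sum_ite_eq, Finset.sum_ite_eq']
    rw [hv', map_sum]
    simp only [map_smul, smul_eq_mul, hsingle]
    rw [← Finset.sum_mul, hv, zero_mul]
  -- static quadratic bound
  have static : ∀ a : Fin n → ℝ, a ∈ K →
      |f a - f (fun _ => (∑ i, a i) / n)| ≤ M * ∑ j, (a j - (∑ i, a i) / n) ^ 2 := by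
    intro a haK
    set m : ℝ := (∑ i, a i) / n with hm
    set b : Fin n → ℝ := fun _ => m with hb
    have hsum_mc : (n:ℝ) * (m - c) = ∑ i, (a i - c) := by
      rw [Finset.sum_sub_distrib, Finset.sum_const, Finset.card_univ, Fintype.card_fin,
        nsmul_eq_mul, hm]
      field_simp
    have cheb : (∑ i, (a i - c)) ^ 2 ≤ (n:ℝ) * ∑ i, (a i - c) ^ 2 := by
      have h := sq_sum_le_card_mul_sum_sq (s := (Finset.univ : Finset (Fin n)))
        (f := fun i => a i - c)
      simpa using h
    have hbK : b ∈ K := by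
      have e1 : ((n:ℝ) * (m - c)) ^ 2 ≤ (n:ℝ) * ∑ i, (a i - c) ^ 2 := by
        rw [hsum_mc]; exact cheb
      have h1 : (n:ℝ) * ((n:ℝ) * (m - c) ^ 2) ≤ (n:ℝ) * ∑ i, (a i - c) ^ 2 := by
        calc (n:ℝ) * ((n:ℝ) * (m - c) ^ 2) = ((n:ℝ) * (m - c)) ^ 2 := by ring
          _ ≤ _ := e1
      have h2 : (n:ℝ) * (m - c) ^ 2 ≤ ∑ i, (a i - c) ^ 2 := le_of_mul_le_mul_left h1 hn0
      have hbsum : ∑ j, (b j - c) ^ 2 = (n:ℝ) * (m - c) ^ 2 := by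
        simp [hb, Finset.sum_const, Finset.card_univ, nsmul_eq_mul]
      show ∑ j, (b j - c) ^ 2 ≤ R ^ 2
      rw [hbsum]
      exact h2.trans haK
    set S : ℝ := ∑ j, (a j - m) ^ 2 with hS
    have hS0 : 0 ≤ S := by positivity
    have hnormsq : ‖a - b‖ ^ 2 ≤ S := by
      have h1 : ∀ j, ‖(a - b) j‖ ≤ Real.sqrt S := by
        intro j
        have : (a j - m) ^ 2 ≤ S := by
          refine Finset.single_le_sum (f := fun j => (a j - m) ^ 2) ?_ (Finset.mem_univ j)
          intro i _; positivity
        simpa [hb, Real.norm_eq_abs] using Real.abs_le_sqrt this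
      have h2 : ‖a - b‖ ≤ Real.sqrt S :=
        (pi_norm_le_iff_of_nonneg (Real.sqrt_nonneg _)).2 h1
      calc ‖a - b‖ ^ 2 ≤ Real.sqrt S ^ 2 := by
            exact pow_le_pow_left₀ (norm_nonneg _) h2 2
        _ = S := Real.sq_sqrt hS0
    have hseg : segment ℝ b a ⊆ K := hKconv.segment_subset hbK haK
    have hsegdist : ∀ y ∈ segment ℝ b a, ‖y - b‖ ≤ ‖a - b‖ := by
      intro y hy
      rw [segment_eq_image'] at hy
      obtain ⟨t, ht, rfl⟩ := hy
      have : b + t • (a - b) - b = t • (a - b) := by abel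
      rw [this, norm_smul, Real.norm_eq_abs, abs_of_nonneg ht.1]
      nlinarith [norm_nonneg (a - b), ht.2]
    set D : (Fin n → ℝ) →L[ℝ] ℝ := fderiv ℝ f b with hD
    have hD0 : D (a - b) = 0 := by
      refine grad0 b (hKs hbK) (fun i j => rfl) (a - b) ?_
      have : ∑ j, (a - b) j = ∑ j, (a j - m) := rfl
      rw [this, Finset.sum_sub_distrib, Finset.sum_const, Finset.card_univ,
        Fintype.card_fin, nsmul_eq_mul, hm]
      field_simp
      simp
    -- function with derivative subtracted
    set h : (Fin n → ℝ) → ℝ := fun y => f y - D y + D b with hh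
    have hder : ∀ y ∈ segment ℝ b a,
        HasFDerivWithinAt h (fderiv ℝ f y - D) (segment ℝ b a) y := by
      intro y hy
      have h1 : HasFDerivAt h (fderiv ℝ f y - D) y := by
        exact (((hfdiff y (hKs (hseg hy))).hasFDerivAt.sub D.hasFDerivAt).add_const (D b))
      exact h1.hasFDerivWithinAt
    have hbound : ∀ y ∈ segment ℝ b a, ‖fderiv ℝ f y - D‖ ≤ M * ‖a - b‖ := by
      intro y hy
      calc ‖fderiv ℝ f y - D‖ ≤ M * ‖y - b‖ := hFlip b hbK y (hseg hy)
        _ ≤ M * ‖a - b‖ := mul_le_mul_of_nonneg_left (hsegdist y hy) hM0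
    have hmvt : ‖h a - h b‖ ≤ (M * ‖a - b‖) * ‖a - b‖ :=
      (convex_segment b a).norm_image_sub_le_of_norm_hasFDerivWithin_le hder hbound
        (left_mem_segment ℝ b a) (right_mem_segment ℝ b a)
    have hhab : h a - h b = f a - f b := by
      have : D a - D b = D (a - b) := (map_sub D a b).symm
      simp only [hh]
      rw [show f a - D a + D b - (f b - D b + D b) = f a - f b - (D a - D b) by ring,
        this, hD0, sub_zero]
    rw [hhab] at hmvt
    calc |f a - f (fun _ => (∑ i, a i) / n)| = ‖f a - f b‖ := by rw [Real.norm_eq_abs]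
      _ ≤ M * ‖a - b‖ * ‖a - b‖ := hmvt
      _ = M * ‖a - b‖ ^ 2 := by ring
      _ ≤ M * S := by nlinarith [hnormsq, hM0]
  -- conclude: sum over time
  refine ⟨M + 1, by linarith, ?_⟩
  intro a ha
  rw [← Finset.sum_sub_distrib]
  calc |∑ t, (f (a t) - f (fun _ => (∑ i, a t i) / n))|
      ≤ ∑ t, |f (a t) - f (fun _ => (∑ i, a t i) / n)| :=
        Finset.abs_sum_le_sum_abs _ _
    _ ≤ ∑ t, (M + 1) * ∑ j, (a t j - (∑ i, a t i) / n) ^ 2 := by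
        refine Finset.sum_le_sum fun t _ => ?_
        refine (static (a t) (ha t)).trans ?_
        have hSt : (0:ℝ) ≤ ∑ j, (a t j - (∑ i, a t i) / n) ^ 2 := by positivity
        nlinarith
    _ = (M + 1) * ∑ t, ∑ j, (a t j - (∑ i, a t i) / n) ^ 2 := by
        rw [Finset.mul_sum]
end

section
/- Let n ≥ 2, let r_j : ℝⁿ → ℝ for j = 1,…,n be payoff functions, and suppose there exist ε₁ ≥ 0 and a function f : ℝⁿ → ℝ that is indistinguishable (invariant under every permutation of its n arguments) and twice continuously differentiable on an open set containing the closed Euclidean ball B̄(c^⊗n, R) (c ∈ ℝ, R > 0), such that |r_j(a) − f(a)| ≤ ε₁ for every a ∈ B̄(c^⊗n, R) and every j. Then there exists δ > 0 such that for every j and every a ∈ B̄(c^⊗n, R), writing m̄ = (1/n) Σ_{i=1}^n a_i and r̄(x) = f(x,…,x), one has |r_j(a) − r̄(m̄)| ≤ ε₁ + δ · ‖a − m̄^⊗n‖². -/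
set_option maxHeartbeats 1000000 in
/-- Near-indistinguishable games. If payoffs `r_j` are uniformly
`ε₁`-close on the closed Euclidean ball `B̄(c^⊗n, R)` to an indistinguishable
function `f` that is C² on an open set containing that ball, then there is
`δ > 0` such that for every `j` and every `a` in the ball,
`|r_j(a) − r̄(m̄)| ≤ ε₁ + δ · ‖a − m̄^⊗n‖²`. -/
theorem stmt_8 (n : ℕ) (hn : 2 ≤ n) (c R : ℝ) (hR : 0 < R)
    (r : Fin n → (Fin n → ℝ) → ℝ) (ε₁ : ℝ) (hε₁ : 0 ≤ ε₁)
    (f : (Fin n → ℝ) → ℝ) (s : Set (Fin n → ℝ)) (hs : IsOpen s)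
    (hball : {a : Fin n → ℝ | ∑ j, (a j - c) ^ 2 ≤ R ^ 2} ⊆ s)
    (hsym : ∀ (π : Equiv.Perm (Fin n)) (a : Fin n → ℝ), f (a ∘ π) = f a)
    (hf : ContDiffOn ℝ 2 f s)
    (hclose : ∀ (j : Fin n) (a : Fin n → ℝ), ∑ i, (a i - c) ^ 2 ≤ R ^ 2 →
      |r j a - f a| ≤ ε₁) :
    ∃ δ > 0, ∀ (j : Fin n) (a : Fin n → ℝ), ∑ i, (a i - c) ^ 2 ≤ R ^ 2 →
      |r j a - f (fun _ => (∑ i, a i) / n)| ≤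
        ε₁ + δ * ∑ i, (a i - (∑ i', a i') / n) ^ 2 := by
  classical
  have hn0 : (0:ℝ) < n := by positivity
  set K : Set (Fin n → ℝ) := {a | ∑ j, (a j - c) ^ 2 ≤ R ^ 2} with hKdef
  -- K is convex
  have hKconv : Convex ℝ K := by
    intro x hx y hy p q hp hq hpq
    simp only [hKdef, Set.mem_setOf_eq] at hx hy ⊢
    calc ∑ j, ((p • x + q • y) j - c) ^ 2
        ≤ ∑ j, (p * (x j - c) ^ 2 + q * (y j - c) ^ 2) := by
          refine Finset.sum_le_sum fun i _ => ?_
          have hxy : (p • x + q • y) i = p * x i + q * y i := rfl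
          rw [hxy]
          have hq' : q = 1 - p := by linarith
          subst hq'
          nlinarith [mul_nonneg (mul_nonneg hp hq) (sq_nonneg (x i - y i))]
      _ = p * ∑ j, (x j - c) ^ 2 + q * ∑ j, (y j - c) ^ 2 := by
          rw [Finset.sum_add_distrib, Finset.mul_sum, Finset.mul_sum]
      _ ≤ p * R ^ 2 + q * R ^ 2 := by
          gcongr
      _ = R ^ 2 := by nlinarith
  -- K is compact
  have hKcl : IsClosed K := isClosed_le (by fun_prop) continuous_const
  have hKsub : K ⊆ Metric.closedBall (fun _ => c) R := by
    intro a ha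
    rw [Metric.mem_closedBall, dist_pi_le_iff hR.le]
    intro i
    have h1 : (a i - c) ^ 2 ≤ R ^ 2 := by
      refine le_trans (Finset.single_le_sum (fun j _ => sq_nonneg (a j - c))
        (Finset.mem_univ i)) ha
    have := abs_nonneg (a i - c)
    have h2 : |a i - c| ^ 2 ≤ R ^ 2 := by rwa [sq_abs]
    have : |a i - c| ≤ R := by nlinarith
    simpa [Real.dist_eq] using this
  have hKcomp : IsCompact K :=
    (isCompact_closedBall _ _).of_isClosed_subset hKcl hKsub
  have hKs : K ⊆ s := hball
  -- derivatives
  have hd1 : DifferentiableOn ℝ f s := hf.differentiableOn (by norm_num)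
  set F1 := fderiv ℝ f with hF1def
  have hF1cd : ContDiffOn ℝ 1 F1 s := hf.fderiv_of_isOpen hs (by norm_num)
  have hd2 : DifferentiableOn ℝ F1 s := hF1cd.differentiableOn (by norm_num)
  set F2 := fderiv ℝ F1 with hF2def
  have hF2cont : ContinuousOn F2 s := hF1cd.continuousOn_fderiv_of_isOpen hs le_rfl
  obtain ⟨C, hC⟩ := hKcomp.exists_bound_of_continuousOn (f := F2) (hF2cont.mono hKs)
  set M : ℝ := max C 0 with hMdef
  have hM0 : 0 ≤ M := le_max_right _ _
  refine ⟨M + 1, by positivity, fun j a ha => ?_⟩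
  have haK : a ∈ K := ha
  set m : ℝ := (∑ i, a i) / n with hmdef
  set b : Fin n → ℝ := fun _ => m with hbdef
  set v : Fin n → ℝ := fun i => a i - m with hvdef
  -- b ∈ K
  have hbK : b ∈ K := by
    have hcs : (∑ i, (a i - c)) ^ 2 ≤ (n : ℝ) * ∑ i, (a i - c) ^ 2 := by
      have := sq_sum_le_card_mul_sum_sq (s := Finset.univ) (f := fun i => a i - c)
      simpa using this
    have hsum : ∑ i, (a i - c) = n * (m - c) := by
      rw [Finset.sum_sub_distrib]
      simp [hmdef]
      field_simp
    simp only [hKdef, Set.mem_setOf_eq, hbdef]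
    rw [Finset.sum_const, Finset.card_univ, Fintype.card_fin, nsmul_eq_mul]
    have h2 : (n : ℝ) * ∑ i, (a i - c) ^ 2 ≤ (n:ℝ) * R ^ 2 := by
      exact mul_le_mul_of_nonneg_left ha hn0.le
    rw [hsum] at hcs
    nlinarith
  -- the segment
  set γ : ℝ → (Fin n → ℝ) := fun t => b + t • v with hγdef
  have hγ0 : γ 0 = b := by simp [hγdef]
  have hγ1 : γ 1 = a := by
    funext i; simp [hγdef, hbdef, hvdef]
  have hγK : ∀ t ∈ Set.Icc (0:ℝ) 1, γ t ∈ K := by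
    intro t ht
    have : γ t = (1 - t) • b + t • a := by
      funext i
      simp [hγdef, hbdef, hvdef]
      ring
    rw [this]
    exact hKconv hbK haK (by linarith [ht.2]) ht.1 (by ring)
  have hγs : ∀ t ∈ Set.Icc (0:ℝ) 1, γ t ∈ s := fun t ht => hKs (hγK t ht)
  have hγd : ∀ t : ℝ, HasDerivAt γ v t := by
    intro t
    have h := ((hasDerivAt_id t).smul_const v).const_add b
    simpa [hγdef] using h
  -- gradient of f at b kills v
  have hbs : b ∈ s := hKs hbK
  have hfb : DifferentiableAt ℝ f b := hd1.differentiableAt (hs.mem_nhds hbs)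
  have key : ∀ (π : Equiv.Perm (Fin n)) (w : Fin n → ℝ), F1 b w = F1 b (w ∘ π) := by
    intro π w
    set Lπ : (Fin n → ℝ) →L[ℝ] (Fin n → ℝ) :=
      ContinuousLinearMap.pi (fun j => ContinuousLinearMap.proj (π j)) with hLdef
    have hLapp : ∀ x : Fin n → ℝ, Lπ x = x ∘ π := fun x => rfl
    have hLb : Lπ b = b := by
      funext j; simp [hLapp, hbdef]
    have hcomp : f ∘ Lπ = f := by
      funext x; simp only [Function.comp_apply, hLapp]; exact hsym π x
    have h1 : fderiv ℝ (f ∘ Lπ) b = (fderiv ℝ f (Lπ b)).comp (fderiv ℝ Lπ b) :=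
      fderiv_comp b (hLb ▸ hfb) Lπ.differentiableAt
    rw [Lπ.fderiv, hcomp, hLb, ← hF1def] at h1
    conv_lhs => rw [h1]
    simp [hLapp]
  have hsumv : ∑ i, v i = 0 := by
    simp only [hvdef]
    rw [Finset.sum_sub_distrib]
    simp [hmdef]
    field_simp
    ring
  have hgrad : F1 b v = 0 := by
    have i0 : Fin n := ⟨0, by omega⟩
    have hsingle : ∀ i : Fin n, F1 b (Pi.single i (1:ℝ)) = F1 b (Pi.single i0 (1:ℝ)) := by
      intro i
      have hsw : (Pi.single i0 (1:ℝ)) ∘ (Equiv.swap i0 i) = Pi.single i (1:ℝ) := by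
        funext j
        simp only [Function.comp_apply, Pi.single_apply]
        rcases eq_or_ne j i with h | h
        · subst h; simp [Equiv.swap_apply_right]
        · have h2 : Equiv.swap i0 i j ≠ i0 := by
            intro hc
            apply h
            have := congrArg (Equiv.swap i0 i) hc
            simpa [Equiv.swap_apply_self, Equiv.swap_apply_left] using this
          simp [h, h2]
      rw [← hsw, ← key (Equiv.swap i0 i) (Pi.single i0 (1:ℝ))]
    have hv : v = ∑ i, Pi.single i (v i) := by
      funext j
      rw [Finset.sum_apply]
      simp [Pi.single_apply]
    have hone : ∀ i : Fin n, (Pi.single i (v i) : Fin n → ℝ) = v i • (Pi.single i (1:ℝ) : Fin n → ℝ) := by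
      intro i
      rw [← Pi.single_smul]
      norm_num
    calc F1 b v = ∑ i, F1 b (Pi.single i (v i)) := by
          conv_lhs => rw [hv]
          rw [map_sum]
      _ = ∑ i, v i * F1 b (Pi.single i0 (1:ℝ)) := by
          refine Finset.sum_congr rfl fun i _ => ?_
          rw [hone i, map_smul, hsingle i, smul_eq_mul]
      _ = (∑ i, v i) * F1 b (Pi.single i0 (1:ℝ)) := by rw [← Finset.sum_mul]
      _ = 0 := by rw [hsumv, zero_mul]
  -- second derivative bound
  set S : ℝ := ∑ i, (a i - m) ^ 2 with hSdef
  have hS0 : 0 ≤ S := Finset.sum_nonneg fun i _ => sq_nonneg _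
  have hvS : ‖v‖ ^ 2 ≤ S := by
    have h1 : ‖v‖ ≤ Real.sqrt S := by
      rw [pi_norm_le_iff_of_nonneg (Real.sqrt_nonneg _)]
      intro i
      have h2 : (a i - m) ^ 2 ≤ S :=
        Finset.single_le_sum (fun j _ => sq_nonneg (a j - m)) (Finset.mem_univ i)
      have : ‖v i‖ = Real.sqrt ((a i - m) ^ 2) := by
        rw [Real.sqrt_sq_eq_abs]; simp [hvdef]
      rw [this]
      exact Real.sqrt_le_sqrt h2
    calc ‖v‖ ^ 2 ≤ Real.sqrt S ^ 2 := by
          exact pow_le_pow_left₀ (norm_nonneg v) h1 2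
      _ = S := Real.sq_sqrt hS0
  set C2 : ℝ := M * ‖v‖ ^ 2 with hC2def
  have hC2nonneg : 0 ≤ C2 := by positivity
  -- derivative of t ↦ F1 (γ t) v, and MVT
  have hφderiv : ∀ t ∈ Set.Icc (0:ℝ) 1,
      HasDerivAt (fun t => F1 (γ t) v) (F2 (γ t) v v) t := by
    intro t ht
    have h2 : HasFDerivAt F1 (F2 (γ t)) (γ t) :=
      (hd2.differentiableAt (hs.mem_nhds (hγs t ht))).hasFDerivAt
    have h3 : HasDerivAt (fun t => F1 (γ t)) (F2 (γ t) v) t :=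
      h2.comp_hasDerivAt t (hγd t)
    have h4 := (ContinuousLinearMap.apply ℝ ℝ v).hasFDerivAt.comp_hasDerivAt t h3
    exact h4
  have hφbound : ∀ t ∈ Set.Icc (0:ℝ) 1, ‖F2 (γ t) v v‖ ≤ C2 := by
    intro t ht
    have h1 : ‖F2 (γ t) v v‖ ≤ ‖F2 (γ t)‖ * ‖v‖ * ‖v‖ :=
      (F2 (γ t) v).le_of_opNorm_le ((F2 (γ t)).le_opNorm v) v
    have h2 : ‖F2 (γ t)‖ ≤ M := le_trans (hC _ (hγK t ht)) (le_max_left _ _)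
    calc ‖F2 (γ t) v v‖ ≤ ‖F2 (γ t)‖ * ‖v‖ * ‖v‖ := h1
      _ ≤ M * ‖v‖ * ‖v‖ := by
          have := norm_nonneg v
          gcongr
      _ = C2 := by rw [hC2def]; ring
  have hφ0 : F1 (γ 0) v = 0 := by rw [hγ0]; exact hgrad
  have hφmvt : ∀ t ∈ Set.Icc (0:ℝ) 1, ‖F1 (γ t) v - F1 (γ 0) v‖ ≤ C2 * t := by
    have := norm_image_sub_le_of_norm_deriv_le_segment'
      (f := fun t => F1 (γ t) v) (f' := fun t => F2 (γ t) v v)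
      (fun t ht => (hφderiv t ht).hasDerivWithinAt)
      (fun t ht => hφbound t (Set.Ico_subset_Icc_self ht))
    simpa using this
  have hgbound : ∀ t ∈ Set.Ico (0:ℝ) 1, ‖F1 (γ t) v‖ ≤ C2 := by
    intro t ht
    have h1 := hφmvt t (Set.Ico_subset_Icc_self ht)
    rw [hφ0, sub_zero] at h1
    calc ‖F1 (γ t) v‖ ≤ C2 * t := h1
      _ ≤ C2 * 1 := by
          exact mul_le_mul_of_nonneg_left ht.2.le hC2nonneg
      _ = C2 := mul_one _
  have hgderiv : ∀ t ∈ Set.Icc (0:ℝ) 1,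
      HasDerivWithinAt (fun t => f (γ t)) (F1 (γ t) v) (Set.Icc (0:ℝ) 1) t := by
    intro t ht
    have hfd : HasFDerivAt f (F1 (γ t)) (γ t) :=
      (hd1.differentiableAt (hs.mem_nhds (hγs t ht))).hasFDerivAt
    exact (hfd.comp_hasDerivAt t (hγd t)).hasDerivWithinAt
  have hmain : ‖f a - f b‖ ≤ C2 := by
    have := norm_image_sub_le_of_norm_deriv_le_segment_01' hgderiv hgbound
    rwa [hγ1, hγ0] at this
  -- conclusion
  have hclose' := hclose j a ha
  have hfb' : f (fun _ => (∑ i, a i) / (n:ℝ)) = f b := rfl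
  rw [hfb']
  have h1 : |r j a - f b| ≤ |r j a - f a| + |f a - f b| := by
    have := abs_sub_abs_le_abs_sub (r j a - f b) (r j a - f a)
    calc |r j a - f b| = |(r j a - f a) + (f a - f b)| := by congr 1; ring
      _ ≤ |r j a - f a| + |f a - f b| := abs_add_le _ _
  have h2 : |f a - f b| ≤ C2 := hmain
  have h3 : C2 ≤ (M + 1) * S := by
    rw [hC2def]
    nlinarith
  calc |r j a - f b| ≤ |r j a - f a| + |f a - f b| := h1
    _ ≤ ε₁ + C2 := add_le_add hclose' h2
    _ ≤ ε₁ + (M + 1) * S := by linarith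
end

section
/- Let v̲ < v̄ be real numbers and let G : ℝ → ℝ be continuous on [v̲, v̄], differentiable on (v̲, v̄), and strictly positive on (v̲, v̄). Define the bid function h : (v̲, v̄) → ℝ by h(v) = v − (1/G(v)) ∫_{v̲}^{v} G(x) dx. Then h is differentiable on (v̲, v̄) and satisfies the first-order equilibrium ODE of the symmetric first-price auction: (v − h(v)) G'(v) = h'(v) G(v) for all v ∈ (v̲, v̄); equivalently, (h·G)'(v) = v G'(v). -/
/-- Symmetric first-price auction. If `G` is continuous on
`[v̲,v̄]`, differentiable and strictly positive on `(v̲,v̄)`, then the bid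
function `h(v) = v − (1/G(v)) ∫_{v̲}^{v} G(x) dx` is differentiable on `(v̲,v̄)`
and satisfies the first-order equilibrium ODE
`(v − h(v)) G'(v) = h'(v) G(v)`; equivalently `(h·G)'(v) = v G'(v)`. -/
theorem stmt_16 (vlo vhi : ℝ) (hlt : vlo < vhi) (G : ℝ → ℝ)
    (hGc : ContinuousOn G (Set.Icc vlo vhi))
    (hGd : ∀ v ∈ Set.Ioo vlo vhi, DifferentiableAt ℝ G v)
    (hGpos : ∀ v ∈ Set.Ioo vlo vhi, 0 < G v)
    (h : ℝ → ℝ)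
    (hdef : ∀ v, h v = v - (1 / G v) * ∫ x in vlo..v, G x) :
    ∀ v ∈ Set.Ioo vlo vhi,
      DifferentiableAt ℝ h v ∧
      (v - h v) * deriv G v = deriv h v * G v ∧
      deriv (fun x => h x * G x) v = v * deriv G v := by
  intro v hv
  obtain ⟨hv1, hv2⟩ := hv
  set F : ℝ → ℝ := fun t => ∫ x in vlo..t, G x with hF
  have hGne : G v ≠ 0 := ne_of_gt (hGpos v ⟨hv1, hv2⟩)
  have hGdv : DifferentiableAt ℝ G v := hGd v ⟨hv1, hv2⟩
  have hG' : HasDerivAt G (deriv G v) v := hGdv.hasDerivAt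
  -- FTC: F has derivative G v at v
  have hint : IntervalIntegrable G MeasureTheory.volume vlo v := by
    apply ContinuousOn.intervalIntegrable
    apply hGc.mono
    rw [Set.uIcc_of_le hv1.le]
    exact Set.Icc_subset_Icc le_rfl hv2.le
  have hFv : HasDerivAt F (G v) v :=
    intervalIntegral.integral_hasDerivAt_right hint
      ((hGc.mono Set.Ioo_subset_Icc_self).stronglyMeasurableAtFilter isOpen_Ioo v ⟨hv1, hv2⟩)
      (hGdv.continuousAt)
  have hhfun : h = fun t => t - (1 / G t) * F t := funext hdef
  have hinv : HasDerivAt (fun t => 1 / G t) (-(deriv G v) / (G v) ^ 2) v := by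
    simpa [one_div] using (show HasDerivAt (fun t => (G t)⁻¹) (-(deriv G v) / (G v) ^ 2) v from hG'.inv hGne)
  have hh : HasDerivAt h (1 - ((-(deriv G v) / (G v) ^ 2) * F v + (1 / G v) * G v)) v := by
    rw [hhfun]
    exact (hasDerivAt_id v).sub (hinv.mul hFv)
  have hhv : h v = v - (1 / G v) * F v := hdef v
  have hderivh : deriv h v = F v * deriv G v / (G v) ^ 2 := by
    rw [hh.deriv]; field_simp; ring
  refine ⟨hh.differentiableAt, ?_, ?_⟩
  · rw [hderivh, hhv]; field_simp; ring
  · have hmul : HasDerivAt (fun x => h x * G x) (deriv h v * G v + h v * deriv G v) v :=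
      hh.differentiableAt.hasDerivAt.mul hG'
    rw [hmul.deriv, hderivh, hhv]
    field_simp; ring
end
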